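/- For every integer k ≥ 1, if G is a connected graph obtained from the disjoint union of k copies of K₆ by adding exactly k − 1 edges (between distinct copies, so that the result is connected), then G has m = 16k − 1 edges and s(G) = 3k = (3/16)(m + 1); in particular the bound s(G) ≤ (3/16)(m+1) for connected graphs is tight. -/

import Mathlib

open SimpleGraph

/-- `G` has a `K₄` minor (branch-set formulation: four nonempty, pairwise disjoint,
connected branch sets with an edge between every two of them). -/
def HasK4Minor {V : Type*} (G : SimpleGraph V) : Prop :=
  ∃ B : Fin 4 → Set V,
    (∀ i, (B i).Nonempty) ∧
    (∀ i, (G.induce (B i)).Connected) ∧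
    (∀ i j, i ≠ j → Disjoint (B i) (B j)) ∧
    (∀ i j, i ≠ j → ∃ u ∈ B i, ∃ v ∈ B j, G.Adj u v)

/-- `X` is a transversal of `G`: the graph `G − X` has no `K₄` minor. -/
def IsTransversal {V : Type*} (G : SimpleGraph V) (X : Finset V) : Prop :=
  ¬ HasK4Minor (G.induce ((↑X : Set V)ᶜ))

/-- `s(G)`: the minimum size of a transversal of `G`. -/
noncomputable def transNum {V : Type*} (G : SimpleGraph V) : ℕ :=
  sInf {n : ℕ | ∃ X : Finset V, X.card = n ∧ IsTransversal G X}

/-- The disjoint union of `k` copies of the complete graph `K_r`,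
on the vertex set `Fin k × Fin r` (the first coordinate names the copy). -/
def disjointCliques (k r : ℕ) : SimpleGraph (Fin k × Fin r) where
  Adj a b := a.1 = b.1 ∧ a ≠ b
  symm := ⟨by rintro a b ⟨h1, h2⟩; exact ⟨h1.symm, h2.symm⟩⟩
  loopless := ⟨by rintro a ⟨-, h⟩; exact h rfl⟩

/-- If `G` is a connected graph obtained from the disjoint union of `k` copies of `K₆`
by adding exactly `k - 1` edges between distinct copies, then `G` has `16k - 1` edges
and `s(G) = 3k`. -/

lemma reach_map {α β : Type*} (G : SimpleGraph α) (R : SimpleGraph β) (f : α → β)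
    (hf : ∀ u v, G.Adj u v → f u = f v ∨ R.Reachable (f u) (f v)) {x y : α}
    (hxy : G.Reachable x y) : R.Reachable (f x) (f y) := by
  obtain ⟨w⟩ := hxy
  induction w with
  | nil => exact Reachable.refl _
  | cons h p ih =>
    rcases hf _ _ h with h' | h'
    · rw [h']; exact ih
    · exact h'.trans ih

lemma edgeSet_ncard_eq {V : Type*} [Fintype V] [DecidableEq V] (G : SimpleGraph V)
    [Fintype G.edgeSet] : G.edgeSet.ncard = G.edgeFinset.card := by
  rw [← Set.ncard_coe_finset G.edgeFinset, coe_edgeFinset]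

lemma conn_card_le {V : Type*} [Fintype V] (G : SimpleGraph V) (h : G.Connected) :
    Fintype.card V ≤ G.edgeSet.ncard + 1 := by
  classical
  generalize hn : G.edgeSet.ncard = n
  induction n using Nat.strong_induction_on generalizing G with
  | _ n ih =>
  by_cases hac : G.IsAcyclic
  · have ht : G.IsTree := ⟨h, hac⟩
    have := ht.card_edgeFinset
    rw [edgeSet_ncard_eq] at hn
    omega
  · simp only [IsAcyclic] at hac
    push_neg at hac
    obtain ⟨v₀, c, hc⟩ := hac
    have hlen : c.edges ≠ [] := by
      have h3 := hc.three_le_length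
      intro hnil
      have : c.edges.length = 0 := by rw [hnil]; rfl
      rw [SimpleGraph.Walk.length_edges] at this
      omega
    obtain ⟨e, he⟩ := List.exists_mem_of_ne_nil _ hlen
    induction e using Sym2.ind with
    | _ x y =>
    have hre : G.Adj x y ∧ (G \ fromEdgeSet {s(x, y)}).Reachable x y :=
      adj_and_reachable_delete_edges_iff_exists_cycle.2 ⟨v₀, c, hc, he⟩
    set G' := G \ fromEdgeSet {s(x, y)} with hG'
    have hedge : G'.edgeSet = G.edgeSet \ {s(x, y)} := by
      simp [hG', edgeSet_sdiff, edgeSet_fromEdgeSet, edgeSet_sdiff_sdiff_isDiag]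
    have hmem : s(x, y) ∈ G.edgeSet := hre.1
    have hn' : G'.edgeSet.ncard = n - 1 := by
      rw [hedge, Set.ncard_diff_singleton_of_mem hmem, hn]
    have hn1 : 1 ≤ n := by
      rw [← hn]
      have := (Set.ncard_pos (Set.toFinite _)).2 ⟨_, hmem⟩
      omega
    have hconn' : G'.Connected := by
      have hpre : G'.Preconnected := by
        intro a b
        have : G.Reachable a b := h a b
        refine reach_map G G' id ?_ this
        intro u v huv
        by_cases hq : s(u, v) = s(x, y)
        · right
          rw [Sym2.eq_iff] at hq
          rcases hq with ⟨rfl, rfl⟩ | ⟨rfl, rfl⟩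
          · exact hre.2
          · exact hre.2.symm
        · right
          refine SimpleGraph.Adj.reachable ?_
          rw [hG', sdiff_adj]
          refine ⟨huv, ?_⟩
          rw [fromEdgeSet_adj]
          rintro ⟨hh, -⟩
          exact hq (by simpa using hh)
      have := h.nonempty
      exact Connected.mk hpre
    have := ih (n - 1) (by omega) G' hconn' hn'
    omega


lemma exists_killed (k : ℕ) (hk : 1 ≤ k) (F : Finset (Sym2 (Fin k × Fin 6)))
    (hFcard : F.card = k - 1)
    (hFbetween : ∀ e ∈ F, ∃ a b : Fin k × Fin 6, e = s(a, b) ∧ a.1 ≠ b.1)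
    (G : SimpleGraph (Fin k × Fin 6))
    (hG : G = disjointCliques k 6 ⊔ SimpleGraph.fromEdgeSet (↑F : Set (Sym2 (Fin k × Fin 6))))
    (hconn : G.Connected) :
    ∃ killed : Fin k → Finset (Fin 6), (∀ c, (killed c).card = 3) ∧
      ∀ e ∈ F, ∃ v : Fin k × Fin 6, v ∈ e ∧ v.2 ∈ killed v.1 := by
  classical
  choose a b hab hne using hFbetween
  set t : {e // e ∈ F} → Finset (Fin k) := fun x => {(a x.1 x.2).1, (b x.1 x.2).1} with ht
  have hall : ∀ s : Finset {e // e ∈ F}, s.card ≤ (s.biUnion t).card := by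
    intro s
    rcases Finset.eq_empty_or_nonempty s with rfl | hs
    · simp
    set T := s.biUnion t with hT
    set W := Option {c : Fin k // c ∉ T} with hW
    let q : Fin k → W := fun c => if h : c ∈ T then none else some ⟨c, h⟩
    let qv : Fin k × Fin 6 → W := fun v => q v.1
    set R : SimpleGraph W := fromEdgeSet ↑(F.image (Sym2.map qv)) with hR
    obtain ⟨x₀, hx₀⟩ := hs
    have hx₀T : (a x₀.1 x₀.2).1 ∈ T := by
      refine Finset.mem_biUnion.2 ⟨x₀, hx₀, ?_⟩
      simp [ht]
    have hsurj : ∀ w : W, ∃ v : Fin k × Fin 6, qv v = w := by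
      rintro (_ | ⟨c, hc⟩)
      · exact ⟨((a x₀.1 x₀.2).1, 0), by simp [qv, q, hx₀T]⟩
      · exact ⟨(c, 0), by simp [qv, q, hc]⟩
    have hRconn : R.Connected := by
      have : Nonempty W := ⟨none⟩
      refine Connected.mk ?_
      intro w₁ w₂
      obtain ⟨v₁, rfl⟩ := hsurj w₁
      obtain ⟨v₂, rfl⟩ := hsurj w₂
      refine reach_map G R qv ?_ (hconn v₁ v₂)
      intro u v huv
      rw [hG, sup_adj] at huv
      rcases huv with h1 | h2
      · left; exact congrArg q h1.1
      · rw [fromEdgeSet_adj] at h2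
        by_cases heq : qv u = qv v
        · left; exact heq
        · right
          refine SimpleGraph.Adj.reachable ?_
          rw [hR, fromEdgeSet_adj]
          exact ⟨Finset.mem_coe.2 (Finset.mem_image.2 ⟨s(u, v), h2.1, Sym2.map_pair_eq _ _ _⟩), heq⟩
    have hsub : R.edgeSet ⊆ ↑((F \ s.image Subtype.val).image (Sym2.map qv)) := by
      intro ε hε
      rw [hR, edgeSet_fromEdgeSet] at hε
      obtain ⟨hε1, hε2⟩ := hε
      obtain ⟨e, heF, rfl⟩ := Finset.mem_image.1 (Finset.mem_coe.1 hε1)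
      refine Finset.mem_coe.2 (Finset.mem_image.2 ⟨e, Finset.mem_sdiff.2 ⟨heF, ?_⟩, rfl⟩)
      intro hes
      obtain ⟨x, hxs, hxe⟩ := Finset.mem_image.1 hes
      apply hε2
      have htT : t x ⊆ T := Finset.subset_biUnion_of_mem t hxs
      have haT : (a x.1 x.2).1 ∈ T := htT (by simp [ht])
      have hbT : (b x.1 x.2).1 ∈ T := htT (by simp [ht])
      have hex : e = s(a x.1 x.2, b x.1 x.2) := by
        rw [← hxe]; exact hab x.1 x.2
      rw [hex, Sym2.map_pair_eq]
      simp only [Sym2.mem_diagSet, Set.mem_setOf_eq, Sym2.isDiag_iff_proj_eq]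
      show qv _ = qv _
      simp [qv, q, haT, hbT]
    have hcard1 : R.edgeSet.ncard ≤ (k - 1) - s.card := by
      calc R.edgeSet.ncard ≤ (↑((F \ s.image Subtype.val).image (Sym2.map qv)) : Set _).ncard :=
            Set.ncard_le_ncard hsub (Set.toFinite _)
        _ = ((F \ s.image Subtype.val).image (Sym2.map qv)).card := Set.ncard_coe_finset _
        _ ≤ (F \ s.image Subtype.val).card := Finset.card_image_le
        _ = F.card - (s.image Subtype.val).card := Finset.card_sdiff_of_subset (by
              intro e he
              obtain ⟨x, _, rfl⟩ := Finset.mem_image.1 he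
              exact x.2)
        _ = (k - 1) - s.card := by
              rw [hFcard, Finset.card_image_of_injective _ Subtype.val_injective]
    have hcardW : Fintype.card W = (k - Finset.card T) + 1 := by
      show Fintype.card (Option {c : Fin k // c ∉ T}) = _
      rw [Fintype.card_option]
      congr 1
      rw [Fintype.card_subtype_compl]
      simp [Fintype.card_coe]
    have hle := conn_card_le R hRconn
    have hsk : s.card ≤ k - 1 := by
      have : (s.image Subtype.val).card ≤ F.card := Finset.card_le_card (by
        intro e he
        obtain ⟨x, _, rfl⟩ := Finset.mem_image.1 he
        exact x.2)
      rwa [Finset.card_image_of_injective _ Subtype.val_injective, hFcard] at this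
    have hTk : T.card ≤ k := by
      have := Finset.card_le_univ T
      simpa using this
    omega
  obtain ⟨f, hfinj, hft⟩ := (Finset.all_card_le_biUnion_card_iff_exists_injective t).1 hall
  set vx : {e // e ∈ F} → Fin k × Fin 6 :=
    fun x => if (a x.1 x.2).1 = f x then a x.1 x.2 else b x.1 x.2 with hvx
  have hvx1 : ∀ x, (vx x).1 = f x := by
    intro x
    simp only [hvx]
    split_ifs with h
    · exact h
    · have := hft x
      simp only [ht, Finset.mem_insert, Finset.mem_singleton] at this
      rcases this with h' | h'
      · exact absurd h'.symm h
      · exact h'.symm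
  have hvx2 : ∀ x : {e // e ∈ F}, vx x ∈ x.val := by
    intro x
    rw [hab x.1 x.2, Sym2.mem_iff]
    simp only [hvx]
    split_ifs
    · exact Or.inl rfl
    · exact Or.inr rfl
  set d : Fin k → Fin 6 :=
    fun c => if h : ∃ x : {e // e ∈ F}, f x = c then (vx h.choose).2 else 0 with hd
  set killed : Fin k → Finset (Fin 6) :=
    fun c => if d c ∈ ({0, 1, 2} : Finset (Fin 6)) then {0, 1, 2} else {0, 1, d c} with hkilled
  have hkcard : ∀ c, (killed c).card = 3 := by
    intro c
    simp only [hkilled]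
    split_ifs with h
    · decide
    · simp only [Finset.mem_insert, Finset.mem_singleton, not_or] at h
      obtain ⟨h0, h1, _⟩ := h
      exact Finset.card_eq_three.2 ⟨0, 1, d c, by decide, Ne.symm h0, Ne.symm h1, rfl⟩
  have hdmem : ∀ c, d c ∈ killed c := by
    intro c
    simp only [hkilled]
    split_ifs with h
    · exact h
    · simp
  refine ⟨killed, hkcard, ?_⟩
  intro e he
  set x : {e // e ∈ F} := ⟨e, he⟩ with hx
  have hex : ∃ x' : {e // e ∈ F}, f x' = f x := ⟨x, rfl⟩
  have hchoose : hex.choose = x := hfinj hex.choose_spec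
  have hdfx : d (f x) = (vx x).2 := by
    simp only [hd]
    rw [dif_pos hex, hchoose]
  refine ⟨vx x, hvx2 x, ?_⟩
  rw [hvx1 x, ← hdfx]
  exact hdmem (f x)

lemma k4_of_four {V' : Type*} (H : SimpleGraph V') (y : Fin 4 → V')
    (hinj : Function.Injective y) (hadj : ∀ i j, i ≠ j → H.Adj (y i) (y j)) :
    HasK4Minor H := by
  refine ⟨fun i => {y i}, fun i => ⟨y i, rfl⟩, ?_, ?_, ?_⟩
  · intro i
    have : Nonempty ↥({y i} : Set V') := ⟨⟨y i, rfl⟩⟩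
    refine Connected.mk ?_
    rintro ⟨u, hu⟩ ⟨v, hv⟩
    simp only [Set.mem_singleton_iff] at hu hv
    subst hu
    subst hv
    exact Reachable.refl _
  · intro i j hij
    rw [Set.disjoint_singleton_left, Set.mem_singleton_iff]
    exact hinj.ne hij
  · intro i j hij
    exact ⟨y i, rfl, y j, rfl, hadj i j hij⟩

lemma cliques_edge_count (k : ℕ) : (disjointCliques k 6).edgeSet.ncard = 15 * k := by
  classical
  have hdeg : ∀ v : Fin k × Fin 6, (disjointCliques k 6).degree v = 5 := by
    intro v
    have hnb : (disjointCliques k 6).neighborFinset v =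
        (Finset.univ.image fun j : Fin 6 => (v.1, j)).erase v := by
      ext w
      rw [mem_neighborFinset, Finset.mem_erase, Finset.mem_image]
      constructor
      · rintro ⟨h1, h2⟩
        exact ⟨fun h => h2 h.symm, w.2, Finset.mem_univ _, Prod.ext h1 rfl⟩
      · rintro ⟨h1, j, -, rfl⟩
        exact ⟨rfl, fun h => h1 h.symm⟩
    rw [← card_neighborFinset_eq_degree, hnb,
      Finset.card_erase_of_mem (Finset.mem_image.2 ⟨v.2, Finset.mem_univ _, rfl⟩),
      Finset.card_image_of_injective _ (fun x y h => by simpa [Prod.ext_iff] using h)]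
    simp
  have hsum := SimpleGraph.sum_degrees_eq_twice_card_edges (disjointCliques k 6)
  simp only [hdeg, Finset.sum_const, Finset.card_univ, Fintype.card_prod, Fintype.card_fin,
    smul_eq_mul] at hsum
  rw [edgeSet_ncard_eq]
  omega

theorem statement3 (k : ℕ) (hk : 1 ≤ k)
    (F : Finset (Sym2 (Fin k × Fin 6)))
    (hFcard : F.card = k - 1)
    (hFbetween : ∀ e ∈ F, ∃ a b : Fin k × Fin 6, e = s(a, b) ∧ a.1 ≠ b.1)
    (G : SimpleGraph (Fin k × Fin 6))
    (hG : G = disjointCliques k 6 ⊔ SimpleGraph.fromEdgeSet (↑F : Set (Sym2 (Fin k × Fin 6))))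
    (hconn : G.Connected) :
    G.edgeSet.ncard = 16 * k - 1 ∧ transNum G = 3 * k ∧
      (transNum G : ℝ) = (3 / 16) * ((G.edgeSet.ncard : ℝ) + 1) := by
  classical
  -- ### edge count
  have hFdiag : (↑F : Set (Sym2 (Fin k × Fin 6))) \ {e : Sym2 (Fin k × Fin 6) | e.IsDiag} = ↑F := by
    ext e
    simp only [Set.mem_diff, Set.mem_setOf_eq, Finset.mem_coe, and_iff_left_iff_imp]
    intro he hd
    obtain ⟨a, b, rfl, hab⟩ := hFbetween e he
    rw [Sym2.mk_isDiag_iff] at hd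
    exact hab (by rw [hd])
  have hEdge : G.edgeSet = (disjointCliques k 6).edgeSet ∪ ↑F := by
    rw [hG, edgeSet_sup, edgeSet_fromEdgeSet, Sym2.diagSet_eq_setOf_isDiag, hFdiag]
  have hdisjE : Disjoint (disjointCliques k 6).edgeSet (↑F : Set (Sym2 (Fin k × Fin 6))) := by
    rw [Set.disjoint_left]
    intro e he heF
    induction e using Sym2.ind with
    | _ u v =>
      obtain ⟨a, b, hab, hne⟩ := hFbetween _ heF
      have h1 : u.1 = v.1 := ((mem_edgeSet _).1 he).1
      rw [Sym2.eq_iff] at hab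
      rcases hab with ⟨rfl, rfl⟩ | ⟨rfl, rfl⟩
      · exact hne h1
      · exact hne h1.symm
  have hcount : G.edgeSet.ncard = 16 * k - 1 := by
    rw [hEdge, Set.ncard_union_eq hdisjE (Set.toFinite _) (Set.toFinite _),
      cliques_edge_count, Set.ncard_coe_finset, hFcard]
    omega
  -- ### lower bound
  have hlower : ∀ X : Finset (Fin k × Fin 6), IsTransversal G X → 3 * k ≤ X.card := by
    intro X hX
    by_contra hlt
    push_neg at hlt
    have hsum : X.card = ∑ c : Fin k, (X.filter fun v => v.1 = c).card :=
      Finset.card_eq_sum_card_fiberwise (fun x _ => Finset.mem_univ x.1)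
    have hex : ∃ c : Fin k, (X.filter fun v => v.1 = c).card < 3 := by
      by_contra h
      push_neg at h
      have : 3 * k ≤ X.card := by
        rw [hsum]
        calc 3 * k = ∑ _c : Fin k, 3 := by
              simp [Finset.sum_const, Finset.card_univ, mul_comm]
          _ ≤ _ := Finset.sum_le_sum fun c _ => h c
      omega
    obtain ⟨c, hc⟩ := hex
    set copyF := Finset.univ.image (fun j : Fin 6 => (c, j)) with hcopyF
    have hinj6 : Function.Injective (fun j : Fin 6 => ((c, j) : Fin k × Fin 6)) :=
      fun a b h => by simpa [Prod.ext_iff] using h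
    have hc6 : copyF.card = 6 := by
      rw [hcopyF, Finset.card_image_of_injective _ hinj6]
      simp
    have hsd : copyF \ X = copyF \ (X.filter fun v => v.1 = c) := by
      ext v
      simp only [Finset.mem_sdiff, Finset.mem_filter, hcopyF, Finset.mem_image]
      constructor
      · rintro ⟨⟨j, hj, rfl⟩, hv⟩
        exact ⟨⟨j, hj, rfl⟩, fun hh => hv hh.1⟩
      · rintro ⟨⟨j, hj, rfl⟩, hv⟩
        exact ⟨⟨j, hj, rfl⟩, fun hh => hv ⟨hh, rfl⟩⟩
    have h4 : 4 ≤ (copyF \ X).card := by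
      have hle := Finset.le_card_sdiff (X.filter fun v => v.1 = c) copyF
      rw [← hsd] at hle
      omega
    obtain ⟨t4, ht4, ht4c⟩ := Finset.exists_subset_card_eq h4
    obtain ⟨emb, hembinj, hmem4⟩ :
        ∃ emb : Fin 4 → Fin k × Fin 6, Function.Injective emb ∧ ∀ i, emb i ∈ copyF \ X := by
      refine ⟨fun i => ↑(((t4.equivFin).trans (finCongr ht4c)).symm i), ?_, ?_⟩
      · intro i j h
        exact (((t4.equivFin).trans (finCongr ht4c)).symm).injective (Subtype.ext h)
      · intro i
        exact ht4 (((t4.equivFin).trans (finCongr ht4c)).symm i).2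
    have hnotX : ∀ i : Fin 4, emb i ∈ (↑X : Set (Fin k × Fin 6))ᶜ := by
      intro i
      have := (Finset.mem_sdiff.1 (hmem4 i)).2
      simpa using this
    have hcopyc : ∀ i : Fin 4, (emb i).1 = c := by
      intro i
      have := (Finset.mem_sdiff.1 (hmem4 i)).1
      rw [hcopyF, Finset.mem_image] at this
      obtain ⟨j, -, hj⟩ := this
      rw [← hj]
    set y : Fin 4 → ↥((↑X : Set (Fin k × Fin 6))ᶜ) := fun i => ⟨emb i, hnotX i⟩
      with hy
    apply hX
    apply k4_of_four _ y
    · intro i j hij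
      exact hembinj (congrArg Subtype.val hij)
    · intro i j hij
      show G.Adj (emb i) (emb j)
      rw [hG, sup_adj]
      left
      refine ⟨by rw [hcopyc i, hcopyc j], ?_⟩
      intro h
      exact hij (hembinj h)
  -- ### upper bound
  obtain ⟨killed, hkc, hkcov⟩ := exists_killed k hk F hFcard hFbetween G hG hconn
  set X₀ := Finset.univ.biUnion (fun c : Fin k => (killed c).image fun i => ((c, i) : Fin k × Fin 6))
    with hX₀
  have hX₀mem : ∀ v : Fin k × Fin 6, v ∈ X₀ ↔ v.2 ∈ killed v.1 := by
    intro v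
    rw [hX₀]
    simp only [Finset.mem_biUnion, Finset.mem_image, Finset.mem_univ, true_and]
    constructor
    · rintro ⟨c, i, hi, rfl⟩
      exact hi
    · intro h
      exact ⟨v.1, v.2, h, rfl⟩
  have hX₀card : X₀.card = 3 * k := by
    rw [hX₀, Finset.card_biUnion]
    · have h3 : ∀ c : Fin k, ((killed c).image fun i => ((c, i) : Fin k × Fin 6)).card = 3 := by
        intro c
        rw [Finset.card_image_of_injective _
          (fun a b h => by simpa [Prod.ext_iff] using h : Function.Injective
            (fun i => ((c, i) : Fin k × Fin 6))), hkc]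
      rw [Finset.sum_congr rfl (fun c _ => h3 c)]
      simp [Finset.sum_const, Finset.card_univ, mul_comm]
    · intro c1 _ c2 _ hne12
      rw [Function.onFun, Finset.disjoint_left]
      rintro a ha hb
      obtain ⟨i1, -, rfl⟩ := Finset.mem_image.1 ha
      obtain ⟨i2, -, heq⟩ := Finset.mem_image.1 hb
      have : c2 = c1 := congrArg Prod.fst heq
      exact hne12 this.symm
  have hX₀trans : IsTransversal G X₀ := by
    rintro ⟨B, hBne, hBcon, hBdisj, hBadj⟩
    have hnotin : ∀ z : ↥((↑X₀ : Set (Fin k × Fin 6))ᶜ), (z : Fin k × Fin 6) ∉ X₀ :=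
      fun z hz => z.2 (Finset.mem_coe.2 hz)
    have hsame : ∀ u v : ↥((↑X₀ : Set (Fin k × Fin 6))ᶜ),
        (G.induce ((↑X₀ : Set (Fin k × Fin 6))ᶜ)).Adj u v →
        (↑u : Fin k × Fin 6).1 = (↑v : Fin k × Fin 6).1 := by
      intro u v huv
      have hadj : G.Adj ↑u ↑v := huv
      rw [hG, sup_adj] at hadj
      rcases hadj with h | h
      · exact h.1
      · exfalso
        rw [fromEdgeSet_adj] at h
        obtain ⟨w, hw1, hw2⟩ := hkcov _ (Finset.mem_coe.1 h.1)
        have hwX : w ∈ X₀ := (hX₀mem w).2 hw2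
        rw [Sym2.mem_iff] at hw1
        rcases hw1 with rfl | rfl
        · exact hnotin u hwX
        · exact hnotin v hwX
    have hconst : ∀ (i : Fin 4) (x y : ↥(B i)),
        ((↑↑x : Fin k × Fin 6)).1 = ((↑↑y : Fin k × Fin 6)).1 := by
      intro i x y
      have hr := (hBcon i).preconnected x y
      have hres := reach_map _ (⊥ : SimpleGraph (Fin k))
        (fun z : ↥(B i) => ((z : ↥((↑X₀ : Set (Fin k × Fin 6))ᶜ)) : Fin k × Fin 6).1)
        (fun u v huv => Or.inl (hsame _ _ huv)) hr
      exact reachable_bot.1 hres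
    set x : Fin 4 → ↥((↑X₀ : Set (Fin k × Fin 6))ᶜ) := fun i => (hBne i).some with hxdef
    have hxmem : ∀ i, x i ∈ B i := fun i => (hBne i).some_mem
    have hcc : ∀ i j, i ≠ j → ((x i : Fin k × Fin 6)).1 = ((x j : Fin k × Fin 6)).1 := by
      intro i j hij
      obtain ⟨u, hu, v, hv, huvadj⟩ := hBadj i j hij
      have h1 : ((x i : Fin k × Fin 6)).1 = (↑u : Fin k × Fin 6).1 :=
        hconst i ⟨x i, hxmem i⟩ ⟨u, hu⟩
      have h2 : (↑u : Fin k × Fin 6).1 = (↑v : Fin k × Fin 6).1 := hsame u v huvadj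
      have h3 : (↑v : Fin k × Fin 6).1 = ((x j : Fin k × Fin 6)).1 :=
        hconst j ⟨v, hv⟩ ⟨x j, hxmem j⟩
      exact h1.trans (h2.trans h3)
    set c := ((x 0 : Fin k × Fin 6)).1 with hcdef
    have hcall : ∀ i, ((x i : Fin k × Fin 6)).1 = c := by
      intro i
      by_cases h : i = 0
      · rw [h]
      · exact hcc i 0 h
    have hxinj : ∀ i j, i ≠ j → (x i : Fin k × Fin 6).2 ≠ (x j : Fin k × Fin 6).2 := by
      intro i j hij heq
      have hne' : x i ≠ x j := by
        intro he
        exact (Set.disjoint_left.1 (hBdisj i j hij)) (hxmem i) (by rw [he]; exact hxmem j)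
      exact hne' (Subtype.ext (Prod.ext (by rw [hcall i, hcall j]) heq))
    have hnk : ∀ i, (x i : Fin k × Fin 6).2 ∉ killed c := by
      intro i hmem
      have hXmem : (x i : Fin k × Fin 6) ∈ X₀ := by
        rw [hX₀mem, hcall i]
        exact hmem
      exact hnotin (x i) hXmem
    have hcard4 : ((Finset.univ : Finset (Fin 4)).image fun i => (x i : Fin k × Fin 6).2).card = 4 := by
      rw [Finset.card_image_of_injOn fun i _ j _ h => by
        by_contra hij
        exact hxinj i j hij h]
      simp
    have hsubset : ((Finset.univ : Finset (Fin 4)).image fun i => (x i : Fin k × Fin 6).2)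
        ⊆ (killed c)ᶜ := by
      intro z hz
      obtain ⟨i, -, rfl⟩ := Finset.mem_image.1 hz
      simpa using hnk i
    have hle := Finset.card_le_card hsubset
    rw [hcard4, Finset.card_compl, hkc] at hle
    simp at hle
  -- ### assembly
  have htn : transNum G = 3 * k := by
    apply le_antisymm
    · exact Nat.sInf_le ⟨X₀, hX₀card, hX₀trans⟩
    · refine le_csInf ⟨3 * k, ⟨X₀, hX₀card, hX₀trans⟩⟩ ?_
      rintro n ⟨X, rfl, hX⟩
      exact hlower X hX
  refine ⟨hcount, htn, ?_⟩
  rw [htn, hcount]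
  have h16 : (16 * k - 1) + 1 = 16 * k := by omega
  have hcast : ((16 * k - 1 : ℕ) : ℝ) + 1 = 16 * (k : ℝ) := by
    rw [show ((1 : ℝ)) = ((1 : ℕ) : ℝ) by norm_num, ← Nat.cast_add, h16]
    push_cast
    ring
  rw [hcast]
  push_cast
  ring
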